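/- arXiv:2308.15465 — 2 statements merged into one kernel-verified Lean document; each statement's English description precedes it below -/
import Mathlib

section
/- Let i⃗₀, i⃗₁, i⃗₂ be pairwise disjoint lists of distinct level variables of lengths p₀, p₁, p₂. The flat level equation 0 ⊔ i⃗₀ ⊔ i⃗₁ ≐ 0 ⊔ i⃗₀ ⊔ i⃗₂ admits a most general unifier θ given by: i₀ᵏ ↦ x_k ⊔ (⊔_{n∈[p₁]} y_{k,n}) ⊔ (⊔_{m∈[p₂]} z_{k,m}), i₁ⁿ ↦ (⊔_{k∈[p₀]} y_{k,n}) ⊔ (⊔_{m∈[p₂]} v_{n,m}), i₂ᵐ ↦ (⊔_{k∈[p₀]} z_{k,m}) ⊔ (⊔_{n∈[p₁]} v_{n,m}), where the x, y, z, v are pairwise distinct fresh variables. -/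
/-- Universe level expressions: `l ::= i | 0 | S l | l ⊔ l'`. -/
inductive Lvl : Type
  | var : ℕ → Lvl
  | zero : Lvl
  | succ : Lvl → Lvl
  | max : Lvl → Lvl → Lvl
  deriving DecidableEq

namespace Lvl

/-- Interpretation of a level under an assignment `φ` of naturals to variables. -/
def eval (φ : ℕ → ℕ) : Lvl → ℕ
  | .var i => φ i
  | .zero => 0
  | .succ l => l.eval φ + 1
  | .max a b => Nat.max (a.eval φ) (b.eval φ)

/-- Semantic equivalence: equal value under every assignment. -/
def Equiv (l l' : Lvl) : Prop := ∀ φ : ℕ → ℕ, l.eval φ = l'.eval φ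

/-- Application of a level substitution. -/
def subst (θ : ℕ → Lvl) : Lvl → Lvl
  | .var i => θ i
  | .zero => .zero
  | .succ l => .succ (l.subst θ)
  | .max a b => .max (a.subst θ) (b.subst θ)

/-- Free variables of a level. -/
def fv : Lvl → Finset ℕ
  | .var i => {i}
  | .zero => ∅
  | .succ l => l.fv
  | .max a b => a.fv ∪ b.fv

/-- The constant level `n`, i.e. `Sⁿ 0`. -/
def const (n : ℕ) : Lvl := Lvl.succ^[n] Lvl.zero

/-- The level `n + i`, i.e. `Sⁿ i`. -/
def atom (n i : ℕ) : Lvl := Lvl.succ^[n] (Lvl.var i)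

end Lvl

/-- `θ` is a unifier of the equation `l₁ ≐ l₂`. -/
def Unifies (θ : ℕ → Lvl) (l₁ l₂ : Lvl) : Prop := Lvl.Equiv (l₁.subst θ) (l₂.subst θ)

/-- `θ` is a most general unifier of the equation `l₁ ≐ l₂`. -/
def IsMGU (θ : ℕ → Lvl) (l₁ l₂ : Lvl) : Prop :=
  Unifies θ l₁ l₂ ∧ ∀ τ, Unifies τ l₁ l₂ →
    ∃ θ' : ℕ → Lvl, ∀ i ∈ l₁.fv ∪ l₂.fv, Lvl.Equiv ((θ i).subst θ') (τ i)

/-- The level `p ⊔ (n₁ + i₁) ⊔ ... ⊔ (n_m + i_m)` given by canonical-form data. -/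
def buildCanon (p : ℕ) (L : List (ℕ × ℕ)) : Lvl :=
  L.foldr (fun a acc => Lvl.max (Lvl.atom a.1 a.2) acc) (Lvl.const p)

/-- The equation `buildCanon p₁ L₁ ≐ buildCanon p₂ L₂` is in canonical form:
both sides canonical (coefficients bounded by the constant coefficient, variables
pairwise distinct), shared variables have equal coefficients on both sides, and
some coefficient on some side equals `0`. -/
def CanonEqn (p₁ : ℕ) (L₁ : List (ℕ × ℕ)) (p₂ : ℕ) (L₂ : List (ℕ × ℕ)) : Prop :=
  (∀ a ∈ L₁, a.1 ≤ p₁) ∧ (L₁.map Prod.snd).Nodup ∧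
  (∀ a ∈ L₂, a.1 ≤ p₂) ∧ (L₂.map Prod.snd).Nodup ∧
  (∀ a ∈ L₁, ∀ b ∈ L₂, a.2 = b.2 → a.1 = b.1) ∧
  0 ∈ (p₁ :: p₂ :: (L₁ ++ L₂).map Prod.fst)

/-- Join of a list of levels. -/
def sup (L : List Lvl) : Lvl := L.foldr Lvl.max Lvl.zero

-- ===================== AUX =====================
section Aux

theorem foldr_max_le {L : List ℕ} {b : ℕ} : L.foldr max 0 ≤ b ↔ ∀ x ∈ L, x ≤ b := by
  induction L with
  | nil => simp
  | cons a t ih => simp [Nat.max_le, ih]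

theorem le_foldr_max {L : List ℕ} {x : ℕ} (h : x ∈ L) : x ≤ L.foldr max 0 := by
  induction L with
  | nil => simp at h
  | cons a t ih =>
    rcases List.mem_cons.mp h with h | h
    · simp [h]
    · exact le_trans (ih h) (le_max_right _ _)

theorem le_foldr_max_cases {L : List ℕ} {c : ℕ} (h : c ≤ L.foldr max 0) :
    c = 0 ∨ ∃ x ∈ L, c ≤ x := by
  induction L with
  | nil => exact Or.inl (Nat.le_zero.mp h)
  | cons a t ih =>
    rcases le_max_iff.mp h with h | h
    · exact Or.inr ⟨a, List.mem_cons_self, h⟩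
    · rcases ih h with h | ⟨x, hx, hc⟩
      · exact Or.inl h
      · exact Or.inr ⟨x, List.mem_cons_of_mem _ hx, hc⟩

theorem foldr_max_append (L1 L2 : List ℕ) :
    (L1 ++ L2).foldr max 0 = max (L1.foldr max 0) (L2.foldr max 0) := by
  induction L1 with
  | nil => simp
  | cons a t ih => simp only [List.cons_append, List.foldr_cons, ih]; omega

theorem foldr_max_map_succ (L : List ℕ) :
    L.foldr max 0 + 1 ≤ max 1 ((L.map (· + 1)).foldr max 0) := by
  induction L with
  | nil => simp
  | cons a t ih => simp only [List.map_cons, List.foldr_cons]; omega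

theorem eval_max_def (a b : Lvl) (φ : ℕ → ℕ) :
    (Lvl.max a b).eval φ = max (a.eval φ) (b.eval φ) := rfl

theorem sup_cons (x : Lvl) (t : List Lvl) : sup (x :: t) = Lvl.max x (sup t) := rfl

theorem eval_subst' (θ : ℕ → Lvl) (φ : ℕ → ℕ) (l : Lvl) :
    (l.subst θ).eval φ = l.eval (fun j => (θ j).eval φ) := by
  induction l with
  | var i => rfl
  | zero => rfl
  | succ l ih => simp [Lvl.subst, Lvl.eval, ih]
  | max a b iha ihb => simp [Lvl.subst, Lvl.eval, iha, ihb]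

theorem eval_sup (φ : ℕ → ℕ) (L : List Lvl) :
    (sup L).eval φ = (L.map (fun l => l.eval φ)).foldr max 0 := by
  induction L with
  | nil => rfl
  | cons a t ih => rw [sup_cons, eval_max_def, ih]; rfl

theorem subst_sup (θ : ℕ → Lvl) (L : List Lvl) :
    (sup L).subst θ = sup (L.map (Lvl.subst θ)) := by
  induction L with
  | nil => rfl
  | cons a t ih => rw [sup_cons, List.map_cons, sup_cons, ← ih]; rfl

theorem eval_mono {φ ψ : ℕ → ℕ} (h : ∀ i, φ i ≤ ψ i) (l : Lvl) : l.eval φ ≤ l.eval ψ := by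
  induction l with
  | var i => exact h i
  | zero => exact le_refl _
  | succ l ih => simpa [Lvl.eval] using ih
  | max a b iha ihb => exact max_le_max iha ihb

theorem eval_iterate (n : ℕ) (l : Lvl) (φ : ℕ → ℕ) :
    (Lvl.succ^[n] l).eval φ = l.eval φ + n := by
  induction n with
  | zero => rfl
  | succ n ih => rw [Function.iterate_succ_apply']; show Lvl.eval φ (Lvl.succ^[n] l) + 1 = _; omega

theorem eval_atom (n i : ℕ) (φ : ℕ → ℕ) : (Lvl.atom n i).eval φ = n + φ i := by
  simp [Lvl.atom, eval_iterate, Lvl.eval]; omega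

theorem eval_const (p : ℕ) (φ : ℕ → ℕ) : (Lvl.const p).eval φ = p := by
  simp [Lvl.const, eval_iterate, Lvl.eval]

theorem eval_buildCanon (p : ℕ) (L : List (ℕ × ℕ)) (φ : ℕ → ℕ) :
    (buildCanon p L).eval φ = max p ((L.map (fun a => a.1 + φ a.2)).foldr max 0) := by
  induction L with
  | nil => simp [buildCanon, eval_const]
  | cons a t ih =>
    show max ((Lvl.atom a.1 a.2).eval φ) ((buildCanon p t).eval φ) = _
    rw [eval_atom, ih, List.map_cons, List.foldr_cons]
    omega

def consts : Lvl → ℕ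
  | .var _ => 0
  | .zero => 0
  | .succ l => consts l + 1
  | .max a b => max (consts a) (consts b)

def atoms : Lvl → List (ℕ × ℕ)
  | .var i => [(0, i)]
  | .zero => []
  | .succ l => (atoms l).map (fun a => (a.1 + 1, a.2))
  | .max a b => atoms a ++ atoms b

theorem consts_le_eval (l : Lvl) (φ : ℕ → ℕ) : consts l ≤ l.eval φ := by
  induction l with
  | var i => simp [consts]
  | zero => exact le_refl _
  | succ l ih => show consts l + 1 ≤ l.eval φ + 1; omega
  | max a b iha ihb => exact max_le_max iha ihb

theorem atom_le_eval {l : Lvl} {a : ℕ × ℕ} (h : a ∈ atoms l) (φ : ℕ → ℕ) :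
    a.1 + φ a.2 ≤ l.eval φ := by
  induction l generalizing a with
  | var i =>
    simp only [atoms, List.mem_singleton] at h
    simp [h, Lvl.eval]
  | zero => simp [atoms] at h
  | succ l ih =>
    simp only [atoms, List.mem_map] at h
    obtain ⟨b, hb, rfl⟩ := h
    have h2 := ih hb
    show b.1 + 1 + φ b.2 ≤ l.eval φ + 1
    omega
  | max x y ihx ihy =>
    simp only [atoms, List.mem_append] at h
    rcases h with h | h
    · exact le_trans (ihx h) (le_max_left _ _)
    · exact le_trans (ihy h) (le_max_right _ _)

theorem eval_le_atoms (l : Lvl) (φ : ℕ → ℕ) :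
    l.eval φ ≤ max (consts l) (((atoms l).map (fun a => a.1 + φ a.2)).foldr max 0) := by
  induction l with
  | var i => simp [Lvl.eval, consts, atoms]
  | zero => simp [Lvl.eval, consts]
  | succ l ih =>
    have h1 := foldr_max_map_succ ((atoms l).map (fun a => a.1 + φ a.2))
    have h2 : (((atoms l).map (fun a => a.1 + φ a.2)).map (· + 1))
        = ((atoms (Lvl.succ l)).map (fun a => a.1 + φ a.2)) := by
      simp only [atoms, List.map_map]
      congr 1
      funext a
      show a.1 + φ a.2 + 1 = a.1 + 1 + φ a.2
      omega
    rw [h2] at h1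
    show l.eval φ + 1 ≤ max (consts l + 1) _
    omega
  | max x y ihx ihy =>
    show max (x.eval φ) (y.eval φ) ≤ _
    simp only [consts, atoms, List.map_append, foldr_max_append]
    omega

theorem extract_atom {r : Lvl} {c j : ℕ}
    (h : ∀ φ : ℕ → ℕ, c + φ j ≤ r.eval φ) :
    ∃ b ∈ atoms r, b.2 = j ∧ c ≤ b.1 := by
  by_contra hc
  push_neg at hc
  set E := r.eval (fun _ => 0) with hE
  have h1 : c + (E + 1) ≤ r.eval (fun i => if i = j then E + 1 else 0) := by
    simpa using h (fun i => if i = j then E + 1 else 0)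
  have h2 := eval_le_atoms r (fun i => if i = j then E + 1 else 0)
  have h3 : (((atoms r).map (fun a => a.1 + (if a.2 = j then E + 1 else 0)))).foldr max 0
      ≤ c + E := by
    rw [foldr_max_le]
    intro x hx
    simp only [List.mem_map] at hx
    obtain ⟨a, ha, rfl⟩ := hx
    by_cases hj : a.2 = j
    · have := hc a ha hj
      simp only [if_pos hj]
      omega
    · have := atom_le_eval ha (fun _ => 0)
      simp only [if_neg hj]
      omega
  have h4 : consts r ≤ E := consts_le_eval r _
  have h2' : r.eval (fun i => if i = j then E + 1 else 0)
      ≤ max (consts r) ((((atoms r).map (fun a => a.1 + (if a.2 = j then E + 1 else 0)))).foldr max 0) := h2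
  omega

theorem mem_atoms_sup {L : List Lvl} {a : ℕ × ℕ} :
    a ∈ atoms (sup L) ↔ ∃ l ∈ L, a ∈ atoms l := by
  induction L with
  | nil => simp [sup, atoms]
  | cons x t ih =>
    rw [sup_cons]
    simp only [atoms, List.mem_append, ih, List.mem_cons]
    constructor
    · rintro (h | ⟨l, hl, h⟩)
      · exact ⟨x, Or.inl rfl, h⟩
      · exact ⟨l, Or.inr hl, h⟩
    · rintro ⟨l, (rfl | hl), h⟩
      · exact Or.inl h
      · exact Or.inr ⟨l, hl, h⟩

def dom (r : Lvl) (a : ℕ × ℕ) : Bool :=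
  (atoms r).any (fun b => b.2 == a.2 && decide (a.1 ≤ b.1))

theorem dom_spec {r : Lvl} {a : ℕ × ℕ} :
    dom r a = true ↔ ∃ b ∈ atoms r, b.2 = a.2 ∧ a.1 ≤ b.1 := by
  simp [dom]

def evmin (l : Lvl) : ℕ := l.eval (fun _ => 0)

theorem evmin_le (l : Lvl) (φ : ℕ → ℕ) : evmin l ≤ l.eval φ :=
  eval_mono (fun i => Nat.zero_le _) l

def meet (r l : Lvl) : Lvl :=
  buildCanon (min (evmin r) (evmin l)) ((atoms l).filter (dom r) ++ (atoms r).filter (dom l))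

theorem dom_le_eval {r : Lvl} {a : ℕ × ℕ} (h : dom r a = true) (φ : ℕ → ℕ) :
    a.1 + φ a.2 ≤ r.eval φ := by
  obtain ⟨b, hb, h2, h1⟩ := dom_spec.mp h
  calc a.1 + φ a.2 ≤ b.1 + φ b.2 := by rw [h2]; omega
  _ ≤ r.eval φ := atom_le_eval hb φ

theorem meet_le_left (r l : Lvl) (φ : ℕ → ℕ) : (meet r l).eval φ ≤ r.eval φ := by
  rw [meet, eval_buildCanon]
  apply max_le
  · exact le_trans (min_le_left _ _) (evmin_le r φ)
  · rw [foldr_max_le]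
    intro x hx
    simp only [List.mem_map, List.mem_append, List.mem_filter] at hx
    obtain ⟨a, ha, rfl⟩ := hx
    rcases ha with ⟨ha, hd⟩ | ⟨ha, hd⟩
    · exact dom_le_eval hd φ
    · exact atom_le_eval ha φ

theorem meet_le_right (r l : Lvl) (φ : ℕ → ℕ) : (meet r l).eval φ ≤ l.eval φ := by
  rw [meet, eval_buildCanon]
  apply max_le
  · exact le_trans (min_le_right _ _) (evmin_le l φ)
  · rw [foldr_max_le]
    intro x hx
    simp only [List.mem_map, List.mem_append, List.mem_filter] at hx
    obtain ⟨a, ha, rfl⟩ := hx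
    rcases ha with ⟨ha, hd⟩ | ⟨ha, hd⟩
    · exact atom_le_eval ha φ
    · exact dom_le_eval hd φ

theorem meet_ge_atom_right {r l : Lvl} {a : ℕ × ℕ} (ha : a ∈ atoms l)
    (hd : dom r a = true) (φ : ℕ → ℕ) : a.1 + φ a.2 ≤ (meet r l).eval φ := by
  rw [meet, eval_buildCanon]
  refine le_trans (le_foldr_max ?_) (le_max_right _ _)
  simp only [List.mem_map]
  exact ⟨a, List.mem_append_left _ (List.mem_filter.mpr ⟨ha, hd⟩), rfl⟩

theorem meet_ge_atom_left {r l : Lvl} {a : ℕ × ℕ} (ha : a ∈ atoms r)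
    (hd : dom l a = true) (φ : ℕ → ℕ) : a.1 + φ a.2 ≤ (meet r l).eval φ := by
  rw [meet, eval_buildCanon]
  refine le_trans (le_foldr_max ?_) (le_max_right _ _)
  simp only [List.mem_map]
  exact ⟨a, List.mem_append_right _ (List.mem_filter.mpr ⟨ha, hd⟩), rfl⟩

theorem meet_ge_const {r l : Lvl} {c : ℕ} (h1 : c ≤ evmin r) (h2 : c ≤ evmin l)
    (φ : ℕ → ℕ) : c ≤ (meet r l).eval φ := by
  rw [meet, eval_buildCanon]
  exact le_trans (le_min h1 h2) (le_max_left _ _)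

theorem subst_flat (li : List ℕ) (τ : ℕ → Lvl) :
    (Lvl.max Lvl.zero (sup (li.map Lvl.var))).subst τ
      = Lvl.max Lvl.zero (sup (li.map τ)) := by
  show Lvl.max Lvl.zero ((sup (li.map Lvl.var)).subst τ) = _
  rw [subst_sup, List.map_map]
  rfl

theorem eval_flat (li : List ℕ) (τ : ℕ → Lvl) (φ : ℕ → ℕ) :
    (Lvl.max Lvl.zero (sup (li.map τ))).eval φ
      = (li.map (fun j => (τ j).eval φ)).foldr max 0 := by
  rw [eval_max_def, eval_sup, List.map_map]
  show max 0 _ = _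
  rw [Nat.zero_max]
  rfl

theorem eval_subst_flat (li : List ℕ) (τ : ℕ → Lvl) (φ : ℕ → ℕ) :
    ((Lvl.max Lvl.zero (sup (li.map Lvl.var))).subst τ).eval φ
      = (li.map (fun j => (τ j).eval φ)).foldr max 0 := by
  rw [subst_flat, eval_flat]

theorem fv_sup_var {L : List ℕ} {j : ℕ} (h : j ∈ (sup (L.map Lvl.var)).fv) : j ∈ L := by
  induction L with
  | nil => simp [sup, Lvl.fv] at h
  | cons a t ih =>
    rw [List.map_cons, sup_cons] at h
    simp only [Lvl.fv, Finset.mem_union, Finset.mem_singleton] at h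
    rcases h with h | h
    · exact h ▸ List.mem_cons_self
    · exact List.mem_cons_of_mem _ (ih h)

end Aux

section Main

theorem main_aux (i0 i1 i2 : List ℕ) (hnd : (i0 ++ i1 ++ i2).Nodup)
    (fresh : ℕ ⊕ ℕ × ℕ ⊕ ℕ × ℕ ⊕ ℕ × ℕ → ℕ)
    (hinj : Function.Injective fresh)
    (θ : ℕ → Lvl)
    (hθ0 : ∀ j ∈ i0, θ j = Lvl.max (Lvl.var (fresh (Sum.inl (i0.idxOf j))))
        (sup ((List.range i1.length).map
                (fun n => Lvl.var (fresh (Sum.inr (Sum.inl (i0.idxOf j, n))))) ++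
              (List.range i2.length).map
                (fun m => Lvl.var (fresh (Sum.inr (Sum.inr (Sum.inl (i0.idxOf j, m)))))))))
    (hθ1 : ∀ j, j ∉ i0 → j ∈ i1 → θ j =
        sup ((List.range i0.length).map
               (fun k => Lvl.var (fresh (Sum.inr (Sum.inl (k, i1.idxOf j))))) ++
             (List.range i2.length).map
               (fun m => Lvl.var (fresh (Sum.inr (Sum.inr (Sum.inr (i1.idxOf j, m))))))))
    (hθ2 : ∀ j, j ∉ i0 → j ∉ i1 → j ∈ i2 → θ j =
        sup ((List.range i0.length).map
               (fun k => Lvl.var (fresh (Sum.inr (Sum.inr (Sum.inl (k, i2.idxOf j)))))) ++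
             (List.range i1.length).map
               (fun n => Lvl.var (fresh (Sum.inr (Sum.inr (Sum.inr (n, i2.idxOf j)))))))) :
    IsMGU θ (Lvl.max Lvl.zero (sup ((i0 ++ i1).map Lvl.var)))
            (Lvl.max Lvl.zero (sup ((i0 ++ i2).map Lvl.var))) := by
  classical
  simp only [List.nodup_append', List.disjoint_append_left] at hnd
  obtain ⟨⟨nd0, nd1, d01⟩, nd2, d02, d12⟩ := hnd
  have idxlt : ∀ (L : List ℕ) (j : ℕ), j ∈ L → L.idxOf j < L.length :=
    fun L j h => List.idxOf_lt_length_iff.mpr h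
  have idxg : ∀ (L : List ℕ) (j : ℕ) (h : j ∈ L), L.getD (L.idxOf j) 0 = j := by
    intro L j h
    rw [List.getD_eq_getElem _ _ (idxlt L j h)]
    exact List.getElem_idxOf _
  have idxinv : ∀ (L : List ℕ), L.Nodup → ∀ k, (h : k < L.length) →
      L.idxOf (L.getD k 0) = k := by
    intro L h k hk
    rw [List.getD_eq_getElem _ _ hk]
    exact List.Nodup.idxOf_getElem h k hk
  have getDmem : ∀ (L : List ℕ) (k : ℕ), k < L.length → L.getD k 0 ∈ L := by
    intro L k hk
    rw [List.getD_eq_getElem _ _ hk]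
    exact List.getElem_mem _
  constructor
  · -- Unifier
    intro φ
    rw [eval_subst_flat, eval_subst_flat]
    have memle : ∀ (li : List ℕ) (j : ℕ), j ∈ li →
        (θ j).eval φ ≤ (li.map (fun j' => (θ j').eval φ)).foldr max 0 :=
      fun li j h => le_foldr_max (List.mem_map_of_mem h)
    -- occurrence bounds
    have hx0 : ∀ j ∈ i0, ∀ n, n < i1.length →
        φ (fresh (Sum.inr (Sum.inl (i0.idxOf j, n)))) ≤ (θ j).eval φ := by
      intro j hj n hn
      rw [hθ0 j hj, eval_max_def, eval_sup]
      refine le_trans (le_foldr_max ?_) (le_max_right _ _)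
      refine List.mem_map_of_mem (List.mem_append_left _ (List.mem_map_of_mem ?_))
      exact List.mem_range.mpr hn
    have hz0 : ∀ j ∈ i0, ∀ m, m < i2.length →
        φ (fresh (Sum.inr (Sum.inr (Sum.inl (i0.idxOf j, m))))) ≤ (θ j).eval φ := by
      intro j hj m hm
      rw [hθ0 j hj, eval_max_def, eval_sup]
      refine le_trans (le_foldr_max ?_) (le_max_right _ _)
      refine List.mem_map_of_mem (List.mem_append_right _ (List.mem_map_of_mem ?_))
      exact List.mem_range.mpr hm
    have hy1 : ∀ j, j ∉ i0 → j ∈ i1 → ∀ k, k < i0.length →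
        φ (fresh (Sum.inr (Sum.inl (k, i1.idxOf j)))) ≤ (θ j).eval φ := by
      intro j hj0 hj k hk
      rw [hθ1 j hj0 hj, eval_sup]
      refine le_foldr_max ?_
      refine List.mem_map_of_mem (List.mem_append_left _ (List.mem_map_of_mem ?_))
      exact List.mem_range.mpr hk
    have hv1 : ∀ j, j ∉ i0 → j ∈ i1 → ∀ m, m < i2.length →
        φ (fresh (Sum.inr (Sum.inr (Sum.inr (i1.idxOf j, m))))) ≤ (θ j).eval φ := by
      intro j hj0 hj m hm
      rw [hθ1 j hj0 hj, eval_sup]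
      refine le_foldr_max ?_
      refine List.mem_map_of_mem (List.mem_append_right _ (List.mem_map_of_mem ?_))
      exact List.mem_range.mpr hm
    have hz2 : ∀ j, j ∉ i0 → j ∉ i1 → j ∈ i2 → ∀ k, k < i0.length →
        φ (fresh (Sum.inr (Sum.inr (Sum.inl (k, i2.idxOf j))))) ≤ (θ j).eval φ := by
      intro j hj0 hj1 hj k hk
      rw [hθ2 j hj0 hj1 hj, eval_sup]
      refine le_foldr_max ?_
      refine List.mem_map_of_mem (List.mem_append_left _ (List.mem_map_of_mem ?_))
      exact List.mem_range.mpr hk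
    have hv2 : ∀ j, j ∉ i0 → j ∉ i1 → j ∈ i2 → ∀ n, n < i1.length →
        φ (fresh (Sum.inr (Sum.inr (Sum.inr (n, i2.idxOf j))))) ≤ (θ j).eval φ := by
      intro j hj0 hj1 hj n hn
      rw [hθ2 j hj0 hj1 hj, eval_sup]
      refine le_foldr_max ?_
      refine List.mem_map_of_mem (List.mem_append_right _ (List.mem_map_of_mem ?_))
      exact List.mem_range.mpr hn
    apply Nat.le_antisymm
    · rw [foldr_max_le]
      intro x hx
      simp only [List.mem_map] at hx
      obtain ⟨j, hj, rfl⟩ := hx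
      rcases List.mem_append.mp hj with hj | hj
      · exact memle _ j (List.mem_append_left _ hj)
      · -- j ∈ i1
        have hj0 : j ∉ i0 := fun c => d01 c hj
        rw [hθ1 j hj0 hj, eval_sup, foldr_max_le]
        intro x hx
        simp only [List.map_append, List.mem_append, List.mem_map, List.mem_range] at hx
        rcases hx with ⟨l, ⟨k, hk, rfl⟩, rfl⟩ | ⟨l, ⟨m, hm, rfl⟩, rfl⟩
        · -- y (k, indexOf j)
          have hmem : i0.getD k 0 ∈ i0 := getDmem i0 k hk
          have h1 := hx0 _ hmem (i1.idxOf j) (idxlt i1 j hj)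
          rw [idxinv i0 nd0 k hk] at h1
          exact le_trans h1 (memle _ _ (List.mem_append_left _ hmem))
        · -- v (indexOf j, m)
          have hmem : i2.getD m 0 ∈ i2 := getDmem i2 m hm
          have hm0 : i2.getD m 0 ∉ i0 := fun c => d02 c hmem
          have hm1 : i2.getD m 0 ∉ i1 := fun c => d12 c hmem
          have h1 := hv2 _ hm0 hm1 hmem (i1.idxOf j) (idxlt i1 j hj)
          rw [idxinv i2 nd2 m hm] at h1
          exact le_trans h1 (memle _ _ (List.mem_append_right _ hmem))
    · rw [foldr_max_le]
      intro x hx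
      simp only [List.mem_map] at hx
      obtain ⟨j, hj, rfl⟩ := hx
      rcases List.mem_append.mp hj with hj | hj
      · exact memle _ j (List.mem_append_left _ hj)
      · -- j ∈ i2
        have hj0 : j ∉ i0 := fun c => d02 c hj
        have hj1 : j ∉ i1 := fun c => d12 c hj
        rw [hθ2 j hj0 hj1 hj, eval_sup, foldr_max_le]
        intro x hx
        simp only [List.map_append, List.mem_append, List.mem_map, List.mem_range] at hx
        rcases hx with ⟨l, ⟨k, hk, rfl⟩, rfl⟩ | ⟨l, ⟨n, hn, rfl⟩, rfl⟩
        · -- z (k, indexOf j)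
          have hmem : i0.getD k 0 ∈ i0 := getDmem i0 k hk
          have h1 := hz0 _ hmem (i2.idxOf j) (idxlt i2 j hj)
          rw [idxinv i0 nd0 k hk] at h1
          exact le_trans h1 (memle _ _ (List.mem_append_left _ hmem))
        · -- v (n, indexOf j)
          have hmem : i1.getD n 0 ∈ i1 := getDmem i1 n hn
          have hn0 : i1.getD n 0 ∉ i0 := fun c => d01 c hmem
          have h1 := hv1 _ hn0 hmem (i2.idxOf j) (idxlt i2 j hj)
          rw [idxinv i1 nd1 n hn] at h1
          exact le_trans h1 (memle _ _ (List.mem_append_right _ hmem))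
  · -- MGU part
    intro τ hτ
    have hτ' : ∀ φ, ((i0 ++ i1).map (fun j => (τ j).eval φ)).foldr max 0
        = ((i0 ++ i2).map (fun j => (τ j).eval φ)).foldr max 0 := by
      intro φ
      have := hτ φ
      rwa [eval_subst_flat, eval_subst_flat] at this
    -- domination extraction
    have hdom : ∀ (lA lB : List ℕ),
        (∀ φ, ((lA).map (fun j => (τ j).eval φ)).foldr max 0
            = ((lB).map (fun j => (τ j).eval φ)).foldr max 0) →
        ∀ j ∈ lA, ∀ a ∈ atoms (τ j), ∃ j' ∈ lB, dom (τ j') a = true := by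
      intro lA lB he j hj a ha
      have h : ∀ φ : ℕ → ℕ, a.1 + φ a.2 ≤ (Lvl.max Lvl.zero (sup (lB.map τ))).eval φ := by
        intro φ
        rw [eval_flat]
        calc a.1 + φ a.2 ≤ (τ j).eval φ := atom_le_eval ha φ
        _ ≤ ((lA).map (fun j => (τ j).eval φ)).foldr max 0 :=
            le_foldr_max (List.mem_map_of_mem hj)
        _ = _ := he φ
      obtain ⟨b, hb, hb2, hb1⟩ := extract_atom h
      have hb' : b ∈ atoms (sup (lB.map τ)) := by
        simpa [atoms] using hb
      rw [mem_atoms_sup] at hb'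
      obtain ⟨t, ht, hbt⟩ := hb'
      obtain ⟨j', hj', rfl⟩ := List.mem_map.mp ht
      exact ⟨j', hj', dom_spec.mpr ⟨b, hbt, hb2, hb1⟩⟩
    have hconst : ∀ (lA lB : List ℕ),
        (∀ φ, ((lA).map (fun j => (τ j).eval φ)).foldr max 0
            = ((lB).map (fun j => (τ j).eval φ)).foldr max 0) →
        ∀ j ∈ lA, consts (τ j) = 0 ∨ ∃ j' ∈ lB, consts (τ j) ≤ evmin (τ j') := by
      intro lA lB he j hj
      have h1 : consts (τ j) ≤ ((lB).map (fun j => (τ j).eval (fun _ => 0))).foldr max 0 := by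
        calc consts (τ j) ≤ (τ j).eval (fun _ => 0) := consts_le_eval _ _
        _ ≤ ((lA).map (fun j => (τ j).eval (fun _ => 0))).foldr max 0 :=
            le_foldr_max (List.mem_map_of_mem hj)
        _ = _ := he _
      rcases le_foldr_max_cases h1 with h | ⟨x, hx, hc⟩
      · exact Or.inl h
      · obtain ⟨j', hj', rfl⟩ := List.mem_map.mp hx
        exact Or.inr ⟨j', hj', hc⟩
    -- the reverse substitution
    refine ⟨fun v => if h : ∃ s, fresh s = v then
        (match h.choose with
          | .inl k => τ (i0.getD k 0)
          | .inr (.inl (k, n)) => meet (τ (i0.getD k 0)) (τ (i1.getD n 0))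
          | .inr (.inr (.inl (k, m))) => meet (τ (i0.getD k 0)) (τ (i2.getD m 0))
          | .inr (.inr (.inr (n, m))) => meet (τ (i2.getD m 0)) (τ (i1.getD n 0)))
      else Lvl.var v, ?_⟩
    set θf : ℕ → Lvl := fun v => if h : ∃ s, fresh s = v then
        (match h.choose with
          | .inl k => τ (i0.getD k 0)
          | .inr (.inl (k, n)) => meet (τ (i0.getD k 0)) (τ (i1.getD n 0))
          | .inr (.inr (.inl (k, m))) => meet (τ (i0.getD k 0)) (τ (i2.getD m 0))
          | .inr (.inr (.inr (n, m))) => meet (τ (i2.getD m 0)) (τ (i1.getD n 0)))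
      else Lvl.var v with hθf
    have happ : ∀ s, θf (fresh s) =
        (match s with
          | .inl k => τ (i0.getD k 0)
          | .inr (.inl (k, n)) => meet (τ (i0.getD k 0)) (τ (i1.getD n 0))
          | .inr (.inr (.inl (k, m))) => meet (τ (i0.getD k 0)) (τ (i2.getD m 0))
          | .inr (.inr (.inr (n, m))) => meet (τ (i2.getD m 0)) (τ (i1.getD n 0))) := by
      intro s
      have hex : ∃ s', fresh s' = fresh s := ⟨s, rfl⟩
      rw [hθf]
      simp only [dif_pos hex]
      have : hex.choose = s := hinj hex.choose_spec
      rw [this]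
    have happX : ∀ k, θf (fresh (Sum.inl k)) = τ (i0.getD k 0) := fun k => happ _
    have happY : ∀ k n, θf (fresh (Sum.inr (Sum.inl (k, n))))
        = meet (τ (i0.getD k 0)) (τ (i1.getD n 0)) := fun k n => happ _
    have happZ : ∀ k m, θf (fresh (Sum.inr (Sum.inr (Sum.inl (k, m)))))
        = meet (τ (i0.getD k 0)) (τ (i2.getD m 0)) := fun k m => happ _
    have happV : ∀ n m, θf (fresh (Sum.inr (Sum.inr (Sum.inr (n, m)))))
        = meet (τ (i2.getD m 0)) (τ (i1.getD n 0)) := fun n m => happ _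
    -- normalised substituted images
    have substθ0 : ∀ j ∈ i0, (θ j).subst θf =
        Lvl.max (τ j)
          (sup ((List.range i1.length).map (fun n => meet (τ j) (τ (i1.getD n 0))) ++
                (List.range i2.length).map (fun m => meet (τ j) (τ (i2.getD m 0))))) := by
      intro j hj
      rw [hθ0 j hj]
      show Lvl.max (θf (fresh (Sum.inl (i0.idxOf j)))) ((sup _).subst θf) = _
      rw [happX, idxg i0 j hj, subst_sup, List.map_append, List.map_map, List.map_map]
      have eA : (List.range i1.length).map
            (Lvl.subst θf ∘ fun n => Lvl.var (fresh (Sum.inr (Sum.inl (i0.idxOf j, n)))))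
          = (List.range i1.length).map (fun n => meet (τ j) (τ (i1.getD n 0))) := by
        apply List.map_congr_left
        intro n _
        show θf (fresh (Sum.inr (Sum.inl (i0.idxOf j, n)))) = _
        rw [happY, idxg i0 j hj]
      have eB : (List.range i2.length).map
            (Lvl.subst θf ∘ fun m => Lvl.var (fresh (Sum.inr (Sum.inr (Sum.inl (i0.idxOf j, m))))))
          = (List.range i2.length).map (fun m => meet (τ j) (τ (i2.getD m 0))) := by
        apply List.map_congr_left
        intro m _
        show θf (fresh (Sum.inr (Sum.inr (Sum.inl (i0.idxOf j, m))))) = _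
        rw [happZ, idxg i0 j hj]
      rw [eA, eB]
    have substθ1 : ∀ j, j ∉ i0 → j ∈ i1 → (θ j).subst θf =
        sup ((List.range i0.length).map (fun k => meet (τ (i0.getD k 0)) (τ j)) ++
             (List.range i2.length).map (fun m => meet (τ (i2.getD m 0)) (τ j))) := by
      intro j hj0 hj
      rw [hθ1 j hj0 hj, subst_sup, List.map_append, List.map_map, List.map_map]
      have eA : (List.range i0.length).map
            (Lvl.subst θf ∘ fun k => Lvl.var (fresh (Sum.inr (Sum.inl (k, i1.idxOf j)))))
          = (List.range i0.length).map (fun k => meet (τ (i0.getD k 0)) (τ j)) := by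
        apply List.map_congr_left
        intro k _
        show θf (fresh (Sum.inr (Sum.inl (k, i1.idxOf j)))) = _
        rw [happY, idxg i1 j hj]
      have eB : (List.range i2.length).map
            (Lvl.subst θf ∘ fun m => Lvl.var (fresh (Sum.inr (Sum.inr (Sum.inr (i1.idxOf j, m))))))
          = (List.range i2.length).map (fun m => meet (τ (i2.getD m 0)) (τ j)) := by
        apply List.map_congr_left
        intro m _
        show θf (fresh (Sum.inr (Sum.inr (Sum.inr (i1.idxOf j, m))))) = _
        rw [happV, idxg i1 j hj]
      rw [eA, eB]
    have substθ2 : ∀ j, j ∉ i0 → j ∉ i1 → j ∈ i2 → (θ j).subst θf =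
        sup ((List.range i0.length).map (fun k => meet (τ (i0.getD k 0)) (τ j)) ++
             (List.range i1.length).map (fun n => meet (τ j) (τ (i1.getD n 0)))) := by
      intro j hj0 hj1 hj
      rw [hθ2 j hj0 hj1 hj, subst_sup, List.map_append, List.map_map, List.map_map]
      have eA : (List.range i0.length).map
            (Lvl.subst θf ∘ fun k => Lvl.var (fresh (Sum.inr (Sum.inr (Sum.inl (k, i2.idxOf j))))))
          = (List.range i0.length).map (fun k => meet (τ (i0.getD k 0)) (τ j)) := by
        apply List.map_congr_left
        intro k _
        show θf (fresh (Sum.inr (Sum.inr (Sum.inl (k, i2.idxOf j))))) = _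
        rw [happZ, idxg i2 j hj]
      have eB : (List.range i1.length).map
            (Lvl.subst θf ∘ fun n => Lvl.var (fresh (Sum.inr (Sum.inr (Sum.inr (n, i2.idxOf j))))))
          = (List.range i1.length).map (fun n => meet (τ j) (τ (i1.getD n 0))) := by
        apply List.map_congr_left
        intro n _
        show θf (fresh (Sum.inr (Sum.inr (Sum.inr (n, i2.idxOf j))))) = _
        rw [happV, idxg i2 j hj]
      rw [eA, eB]
    -- main goal
    intro i hi
    have hi' : i ∈ i0 ∨ i ∈ i1 ∨ i ∈ i2 := by
      have split : ∀ (li : List ℕ),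
          i ∈ (Lvl.max Lvl.zero (sup (li.map Lvl.var))).fv → i ∈ li := by
        intro li h
        simp only [Lvl.fv, Finset.empty_union] at h
        exact fv_sup_var h
      rcases Finset.mem_union.mp hi with h | h
      · rcases List.mem_append.mp (split _ h) with h | h
        · exact Or.inl h
        · exact Or.inr (Or.inl h)
      · rcases List.mem_append.mp (split _ h) with h | h
        · exact Or.inl h
        · exact Or.inr (Or.inr h)
    rcases hi' with h0 | h1 | h2
    · -- i ∈ i0
      intro φ
      rw [substθ0 i h0, eval_max_def, eval_sup]
      apply Nat.le_antisymm
      · apply max_le le_rfl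
        rw [foldr_max_le]
        intro x hx
        simp only [List.map_append, List.mem_append, List.mem_map, List.mem_range] at hx
        rcases hx with ⟨l, ⟨n, _, rfl⟩, rfl⟩ | ⟨l, ⟨m, _, rfl⟩, rfl⟩
        · exact meet_le_left _ _ φ
        · exact meet_le_left _ _ φ
      · exact le_max_left _ _
    · -- i ∈ i1
      have hn0 : i ∉ i0 := fun c => d01 c h1
      intro φ
      rw [substθ1 i hn0 h1, eval_sup]
      apply Nat.le_antisymm
      · rw [foldr_max_le]
        intro x hx
        simp only [List.map_append, List.mem_append, List.mem_map, List.mem_range] at hx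
        rcases hx with ⟨l, ⟨k, _, rfl⟩, rfl⟩ | ⟨l, ⟨m, _, rfl⟩, rfl⟩
        · exact meet_le_right _ _ φ
        · exact meet_le_right _ _ φ
      · refine le_trans (eval_le_atoms (τ i) φ) (max_le ?_ ?_)
        · rcases hconst (i0 ++ i1) (i0 ++ i2) hτ' i (List.mem_append_right _ h1)
            with hc | ⟨j', hj', hc⟩
          · simp [hc]
          · rcases List.mem_append.mp hj' with hj0' | hj2'
            · have hk := idxlt i0 j' hj0'
              have hle : consts (τ i) ≤ (meet (τ (i0.getD (i0.idxOf j') 0)) (τ i)).eval φ := by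
                apply meet_ge_const
                · rw [idxg i0 j' hj0']; exact hc
                · exact consts_le_eval _ _
              refine le_trans hle (le_foldr_max ?_)
              simp only [List.map_append, List.mem_append, List.mem_map, List.mem_range]
              exact Or.inl ⟨_, ⟨i0.idxOf j', hk, rfl⟩, rfl⟩
            · have hm := idxlt i2 j' hj2'
              have hle : consts (τ i) ≤ (meet (τ (i2.getD (i2.idxOf j') 0)) (τ i)).eval φ := by
                apply meet_ge_const
                · rw [idxg i2 j' hj2']; exact hc
                · exact consts_le_eval _ _
              refine le_trans hle (le_foldr_max ?_)
              simp only [List.map_append, List.mem_append, List.mem_map, List.mem_range]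
              exact Or.inr ⟨_, ⟨i2.idxOf j', hm, rfl⟩, rfl⟩
        · rw [foldr_max_le]
          intro x hx
          simp only [List.mem_map] at hx
          obtain ⟨a, ha, rfl⟩ := hx
          obtain ⟨j', hj', hd⟩ :=
            hdom (i0 ++ i1) (i0 ++ i2) hτ' i (List.mem_append_right _ h1) a ha
          rcases List.mem_append.mp hj' with hj0' | hj2'
          · have hk := idxlt i0 j' hj0'
            have hle : a.1 + φ a.2 ≤ (meet (τ (i0.getD (i0.idxOf j') 0)) (τ i)).eval φ := by
              apply meet_ge_atom_right ha
              rw [idxg i0 j' hj0']; exact hd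
            refine le_trans hle (le_foldr_max ?_)
            simp only [List.map_append, List.mem_append, List.mem_map, List.mem_range]
            exact Or.inl ⟨_, ⟨i0.idxOf j', hk, rfl⟩, rfl⟩
          · have hm := idxlt i2 j' hj2'
            have hle : a.1 + φ a.2 ≤ (meet (τ (i2.getD (i2.idxOf j') 0)) (τ i)).eval φ := by
              apply meet_ge_atom_right ha
              rw [idxg i2 j' hj2']; exact hd
            refine le_trans hle (le_foldr_max ?_)
            simp only [List.map_append, List.mem_append, List.mem_map, List.mem_range]
            exact Or.inr ⟨_, ⟨i2.idxOf j', hm, rfl⟩, rfl⟩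
    · -- i ∈ i2
      have hn0 : i ∉ i0 := fun c => d02 c h2
      have hn1 : i ∉ i1 := fun c => d12 c h2
      have hτ'' : ∀ φ, ((i0 ++ i2).map (fun j => (τ j).eval φ)).foldr max 0
          = ((i0 ++ i1).map (fun j => (τ j).eval φ)).foldr max 0 := fun φ => (hτ' φ).symm
      intro φ
      rw [substθ2 i hn0 hn1 h2, eval_sup]
      apply Nat.le_antisymm
      · rw [foldr_max_le]
        intro x hx
        simp only [List.map_append, List.mem_append, List.mem_map, List.mem_range] at hx
        rcases hx with ⟨l, ⟨k, _, rfl⟩, rfl⟩ | ⟨l, ⟨n, _, rfl⟩, rfl⟩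
        · exact meet_le_right _ _ φ
        · exact meet_le_left _ _ φ
      · refine le_trans (eval_le_atoms (τ i) φ) (max_le ?_ ?_)
        · rcases hconst (i0 ++ i2) (i0 ++ i1) hτ'' i (List.mem_append_right _ h2)
            with hc | ⟨j', hj', hc⟩
          · simp [hc]
          · rcases List.mem_append.mp hj' with hj0' | hj1'
            · have hk := idxlt i0 j' hj0'
              have hle : consts (τ i) ≤ (meet (τ (i0.getD (i0.idxOf j') 0)) (τ i)).eval φ := by
                apply meet_ge_const
                · rw [idxg i0 j' hj0']; exact hc
                · exact consts_le_eval _ _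
              refine le_trans hle (le_foldr_max ?_)
              simp only [List.map_append, List.mem_append, List.mem_map, List.mem_range]
              exact Or.inl ⟨_, ⟨i0.idxOf j', hk, rfl⟩, rfl⟩
            · have hn := idxlt i1 j' hj1'
              have hle : consts (τ i) ≤ (meet (τ i) (τ (i1.getD (i1.idxOf j') 0))).eval φ := by
                apply meet_ge_const
                · exact consts_le_eval _ _
                · rw [idxg i1 j' hj1']; exact hc
              refine le_trans hle (le_foldr_max ?_)
              simp only [List.map_append, List.mem_append, List.mem_map, List.mem_range]
              exact Or.inr ⟨_, ⟨i1.idxOf j', hn, rfl⟩, rfl⟩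
        · rw [foldr_max_le]
          intro x hx
          simp only [List.mem_map] at hx
          obtain ⟨a, ha, rfl⟩ := hx
          obtain ⟨j', hj', hd⟩ :=
            hdom (i0 ++ i2) (i0 ++ i1) hτ'' i (List.mem_append_right _ h2) a ha
          rcases List.mem_append.mp hj' with hj0' | hj1'
          · have hk := idxlt i0 j' hj0'
            have hle : a.1 + φ a.2 ≤ (meet (τ (i0.getD (i0.idxOf j') 0)) (τ i)).eval φ := by
              apply meet_ge_atom_right ha
              rw [idxg i0 j' hj0']; exact hd
            refine le_trans hle (le_foldr_max ?_)
            simp only [List.map_append, List.mem_append, List.mem_map, List.mem_range]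
            exact Or.inl ⟨_, ⟨i0.idxOf j', hk, rfl⟩, rfl⟩
          · have hn := idxlt i1 j' hj1'
            have hle : a.1 + φ a.2 ≤ (meet (τ i) (τ (i1.getD (i1.idxOf j') 0))).eval φ := by
              apply meet_ge_atom_left ha
              rw [idxg i1 j' hj1']; exact hd
            refine le_trans hle (le_foldr_max ?_)
            simp only [List.map_append, List.mem_append, List.mem_map, List.mem_range]
            exact Or.inr ⟨_, ⟨i1.idxOf j', hn, rfl⟩, rfl⟩

end Main

/-- Let `i₀, i₁, i₂` be pairwise disjoint lists of distinct level variables.  The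
flat level equation `0 ⊔ i₀ ⊔ i₁ ≐ 0 ⊔ i₀ ⊔ i₂` admits as a most general unifier
the substitution `θ` mapping `i₀ᵏ ↦ x_k ⊔ (⊔_n y_{k,n}) ⊔ (⊔_m z_{k,m})`,
`i₁ⁿ ↦ (⊔_k y_{k,n}) ⊔ (⊔_m v_{n,m})` and `i₂ᵐ ↦ (⊔_k z_{k,m}) ⊔ (⊔_n v_{n,m})`,
where the `x, y, z, v` are pairwise distinct fresh variables (encoded via an
injective function `fresh` whose range avoids the variables of the equation). -/
theorem mgu_flat_equation (i0 i1 i2 : List ℕ) (hnd : (i0 ++ i1 ++ i2).Nodup)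
    (fresh : ℕ ⊕ ℕ × ℕ ⊕ ℕ × ℕ ⊕ ℕ × ℕ → ℕ)
    (hinj : Function.Injective fresh)
    (hfresh : ∀ a, fresh a ∉ i0 ++ i1 ++ i2) :
    IsMGU
      (fun j =>
        if j ∈ i0 then
          let k := i0.idxOf j
          Lvl.max (Lvl.var (fresh (Sum.inl k)))
            (sup ((List.range i1.length).map
                    (fun n => Lvl.var (fresh (Sum.inr (Sum.inl (k, n))))) ++
                  (List.range i2.length).map
                    (fun m => Lvl.var (fresh (Sum.inr (Sum.inr (Sum.inl (k, m))))))))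
        else if j ∈ i1 then
          let n := i1.idxOf j
          sup ((List.range i0.length).map
                 (fun k => Lvl.var (fresh (Sum.inr (Sum.inl (k, n))))) ++
               (List.range i2.length).map
                 (fun m => Lvl.var (fresh (Sum.inr (Sum.inr (Sum.inr (n, m)))))))
        else if j ∈ i2 then
          let m := i2.idxOf j
          sup ((List.range i0.length).map
                 (fun k => Lvl.var (fresh (Sum.inr (Sum.inr (Sum.inl (k, m)))))) ++
               (List.range i1.length).map
                 (fun n => Lvl.var (fresh (Sum.inr (Sum.inr (Sum.inr (n, m)))))))
        else Lvl.var j)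
      (Lvl.max Lvl.zero (sup ((i0 ++ i1).map Lvl.var)))
      (Lvl.max Lvl.zero (sup ((i0 ++ i2).map Lvl.var))) := by
  apply main_aux i0 i1 i2 hnd fresh hinj
  · intro j hj
    simp only [if_pos hj]
  · intro j hj0 hj1
    simp only [if_neg hj0, if_pos hj1]
  · intro j hj0 hj1 hj2
    simp only [if_neg hj0, if_neg hj1, if_pos hj2]
end

section
/- Correctness of the constraint-postponement unification algorithm: if the algorithm, starting from configuration (C; ∅) and repeatedly applying rules (Solve) and (Fail), reaches (∅; θ), then θ is a most general unifier of the problem C; and if it reaches ⊥, then C has no unifier. -/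
/-- Level equations. -/
abbrev Eqn := Lvl × Lvl

/-- Applying a level substitution to both sides of an equation. -/
def substEqn (σ : ℕ → Lvl) (e : Eqn) : Eqn := (e.1.subst σ, e.2.subst σ)

/-- `τ` is a unifier (solution) of the unification problem `C`. -/
def SolvesP (τ : ℕ → Lvl) (C : Finset Eqn) : Prop := ∀ e ∈ C, Unifies τ e.1 e.2

/-- `θ` is a most general unifier of the problem `C`: it solves `C` and every
solution factors through it, up to `≃`, on the variables of `C`. -/
def IsMGUP (θ : ℕ → Lvl) (C : Finset Eqn) : Prop :=
  SolvesP θ C ∧ ∀ τ, SolvesP τ C →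
    ∃ θ' : ℕ → Lvl, ∀ j : ℕ, (∃ e ∈ C, j ∈ e.1.fv ∪ e.2.fv) →
      Lvl.Equiv ((θ j).subst θ') (τ j)

/-- Unification configurations: either failure `⊥` or a pair of a finite set of
equations and a substitution. -/
inductive Config : Type
  | bot : Config
  | ok : Finset Eqn → (ℕ → Lvl) → Config

/-- The transition system on configurations.  Rule (Solve) removes an equation
`e` admitting an mgu `σ` whose domain is exactly the free variables of `e`
(`σ` is the identity outside of them) and whose range variables are fresh (they
occur neither in the equations of the configuration, nor in the domain or range
of the current substitution `θ`); it applies `σ` to the remaining constraints and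
produces the substitution `σ ∪ θ[σ]` (which, as `θ` is the identity on the
domain of `σ`, is `fun i => (θ i)[σ]`).  Rule (Fail) moves to `⊥` when some
equation is not unifiable. -/
inductive Step : Config → Config → Prop
  | solve (e : Eqn) (C : Finset Eqn) (θ σ : ℕ → Lvl)
      (he : e ∉ C) (hσ : IsMGU σ e.1 e.2)
      (hdom : ∀ i : ℕ, i ∉ e.1.fv ∪ e.2.fv → σ i = Lvl.var i)
      (hfresh : ∀ i ∈ e.1.fv ∪ e.2.fv, ∀ j ∈ (σ i).fv,
        (∀ e' ∈ insert e C, j ∉ e'.1.fv ∪ e'.2.fv) ∧ θ j = Lvl.var j ∧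
        ∀ k : ℕ, θ k ≠ Lvl.var k → j ∉ (θ k).fv) :
      Step (.ok (insert e C) θ)
        (.ok (C.image (substEqn σ)) (fun i => (θ i).subst σ))
  | fail (e : Eqn) (C : Finset Eqn) (θ : ℕ → Lvl)
      (he : e ∈ C) (h : ¬ ∃ τ, Unifies τ e.1 e.2) :
      Step (.ok C θ) .bot


namespace Lvl

theorem eval_subst (σ : ℕ → Lvl) (l : Lvl) (φ : ℕ → ℕ) :
    (l.subst σ).eval φ = l.eval (fun i => (σ i).eval φ) := by
  induction l <;> simp [subst, eval, *]

theorem eval_congr {φ φ' : ℕ → ℕ} (l : Lvl) (h : ∀ i ∈ l.fv, φ i = φ' i) :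
    l.eval φ = l.eval φ' := by
  induction l with
  | var i => exact h i (by simp [fv])
  | zero => rfl
  | succ l ih => simp only [eval]; rw [ih h]
  | max a b iha ihb =>
      simp only [eval]
      rw [iha (fun i hi => h i (by simp [fv, hi])),
          ihb (fun i hi => h i (by simp [fv, hi]))]

theorem subst_equiv_of_fv {ρ ρ' : ℕ → Lvl} (l : Lvl)
    (h : ∀ i ∈ l.fv, Equiv (ρ i) (ρ' i)) : Equiv (l.subst ρ) (l.subst ρ') := by
  intro φ
  rw [eval_subst, eval_subst]
  exact eval_congr l (fun i hi => h i hi φ)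

theorem equiv_subst {l l' : Lvl} (h : Equiv l l') (ρ : ℕ → Lvl) :
    Equiv (l.subst ρ) (l'.subst ρ) := by
  intro φ
  rw [eval_subst, eval_subst]
  exact h _

theorem subst_subst (σ τ : ℕ → Lvl) (l : Lvl) :
    (l.subst σ).subst τ = l.subst (fun i => (σ i).subst τ) := by
  induction l <;> simp [subst, *]

theorem subst_var (l : Lvl) : l.subst Lvl.var = l := by
  induction l <;> simp [subst, *]

theorem fv_subst_mem {σ : ℕ → Lvl} {l : Lvl} {i : ℕ} (hi : i ∈ l.fv) :
    (σ i).fv ⊆ (l.subst σ).fv := by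
  induction l with
  | var m => simp [fv] at hi; subst hi; simp [subst]
  | zero => simp [fv] at hi
  | succ l ih => exact ih hi
  | max a b iha ihb =>
      simp only [fv, Finset.mem_union] at hi
      rcases hi with h' | h'
      · exact fun x hx => by simp only [subst, fv, Finset.mem_union]; exact Or.inl (iha h' hx)
      · exact fun x hx => by simp only [subst, fv, Finset.mem_union]; exact Or.inr (ihb h' hx)

end Lvl

/-- `j` occurs in the problem `C`. -/
def VarsP (C : Finset Eqn) (j : ℕ) : Prop := ∃ e ∈ C, j ∈ e.1.fv ∪ e.2.fv

/-- The invariant of the algorithm, relative to the initial problem `C`. -/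
def AlgInv (C : Finset Eqn) : Config → Prop
  | .bot => ¬ ∃ τ, SolvesP τ C
  | .ok C' θ' =>
    (∀ τ', SolvesP τ' C' → SolvesP (fun i => (θ' i).subst τ') C) ∧
    (∀ τ, SolvesP τ C → ∃ τ', SolvesP τ' C' ∧
        ∀ j, VarsP C j → Lvl.Equiv ((θ' j).subst τ') (τ j)) ∧
    (∀ j, VarsP C j → θ' j = Lvl.var j → VarsP C' j)

theorem alginv_step {C : Finset Eqn} {c₁ c₂ : Config} (h : Step c₁ c₂)
    (hi : AlgInv C c₁) : AlgInv C c₂ := by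
  classical
  cases h with
  | fail e C' θ he hne =>
      obtain ⟨-, hb, -⟩ := hi
      rintro ⟨τ, hτ⟩
      obtain ⟨τ', hτ', -⟩ := hb τ hτ
      exact hne ⟨τ', hτ' e he⟩
  | solve e C₀ θ σ he hσ hdom hfresh =>
      obtain ⟨ha, hb, hc⟩ := hi
      set Fresh : ℕ → Prop := fun j => ∃ i ∈ e.1.fv ∪ e.2.fv, j ∈ (σ i).fv with hFresh
      refine ⟨?_, ?_, ?_⟩
      · -- (a)
        intro τ' hτ'
        have key : SolvesP (fun i => (σ i).subst τ') (insert e C₀) := by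
          intro e' he'
          rcases Finset.mem_insert.mp he' with rfl | he'
          · unfold Unifies
            rw [← Lvl.subst_subst, ← Lvl.subst_subst]
            exact Lvl.equiv_subst hσ.1 τ'
          · have := hτ' (substEqn σ e') (Finset.mem_image_of_mem _ he')
            unfold Unifies at this ⊢
            rw [← Lvl.subst_subst, ← Lvl.subst_subst]
            exact this
        have hres := ha _ key
        intro e' he'
        have h1 := hres e' he'
        unfold Unifies at h1 ⊢
        have heq : (fun i => ((θ i).subst σ).subst τ') =
            (fun i => (θ i).subst fun i => (σ i).subst τ') := by
          funext i; rw [Lvl.subst_subst]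
        rw [heq]
        exact h1
      · -- (b)
        intro τ hτ
        obtain ⟨τ₁, hτ₁, hfac⟩ := hb τ hτ
        have hue : Unifies τ₁ e.1 e.2 := hτ₁ e (Finset.mem_insert_self _ _)
        obtain ⟨θ₁, hθ₁⟩ := hσ.2 τ₁ hue
        set τ₂ : ℕ → Lvl := fun j => if Fresh j then θ₁ j else τ₁ j with hτ₂
        have hkey : ∀ i, (i ∈ e.1.fv ∪ e.2.fv ∨ ¬ Fresh i) →
            Lvl.Equiv ((σ i).subst τ₂) (τ₁ i) := by
          intro i hi
          by_cases hie : i ∈ e.1.fv ∪ e.2.fv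
          · have h1 : Lvl.Equiv ((σ i).subst τ₂) ((σ i).subst θ₁) := by
              apply Lvl.subst_equiv_of_fv
              intro j hj
              have hf : Fresh j := ⟨i, hie, hj⟩
              simp only [hτ₂]
              rw [if_pos hf]
              intro φ; rfl
            intro φ; rw [h1 φ, hθ₁ i hie φ]
          · have hnf : ¬ Fresh i := (hi.resolve_left hie)
            rw [hdom i hie]
            show Lvl.Equiv (τ₂ i) (τ₁ i)
            simp only [hτ₂]
            rw [if_neg hnf]
            intro φ; rfl
        refine ⟨τ₂, ?_, ?_⟩
        · intro e'' he''
          obtain ⟨e', he', rfl⟩ := Finset.mem_image.mp he''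
          have hnotfresh : ∀ i, (i ∈ e'.1.fv ∪ e'.2.fv) → ¬ Fresh i := by
            intro i hi hf
            obtain ⟨i0, hi0, hji⟩ := hf
            exact ((hfresh i0 hi0 i hji).1 e' (Finset.mem_insert_of_mem he')) hi
          have h1 : Lvl.Equiv (e'.1.subst (fun i => (σ i).subst τ₂)) (e'.1.subst τ₁) :=
            Lvl.subst_equiv_of_fv _ (fun i hi =>
              hkey i (Or.inr (hnotfresh i (Finset.mem_union_left _ hi))))
          have h2 : Lvl.Equiv (e'.2.subst (fun i => (σ i).subst τ₂)) (e'.2.subst τ₁) :=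
            Lvl.subst_equiv_of_fv _ (fun i hi =>
              hkey i (Or.inr (hnotfresh i (Finset.mem_union_right _ hi))))
          have h3 := hτ₁ e' (Finset.mem_insert_of_mem he')
          show Lvl.Equiv ((e'.1.subst σ).subst τ₂) ((e'.2.subst σ).subst τ₂)
          intro φ
          rw [Lvl.subst_subst, Lvl.subst_subst, h1 φ, h2 φ]
          exact h3 φ
        · intro j hjC
          have hθj : ∀ i ∈ (θ j).fv, i ∈ e.1.fv ∪ e.2.fv ∨ ¬ Fresh i := by
            intro i hi
            by_cases hv : θ j = Lvl.var j
            · rw [hv] at hi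
              simp only [Lvl.fv, Finset.mem_singleton] at hi
              subst hi
              by_cases hje : i ∈ e.1.fv ∪ e.2.fv
              · exact Or.inl hje
              · refine Or.inr ?_
                rintro ⟨i0, hi0, hji0⟩
                obtain ⟨hav, -, -⟩ := hfresh i0 hi0 i hji0
                obtain ⟨e', he', hje'⟩ := hc i hjC hv
                exact hav e' he' hje'
            · refine Or.inr ?_
              rintro ⟨i0, hi0, hji0⟩
              exact (hfresh i0 hi0 i hji0).2.2 j hv hi
          have h1 : Lvl.Equiv ((θ j).subst (fun i => (σ i).subst τ₂)) ((θ j).subst τ₁) :=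
            Lvl.subst_equiv_of_fv _ (fun i hi => hkey i (hθj i hi))
          intro φ
          rw [Lvl.subst_subst, h1 φ]
          exact hfac j hjC φ
      · -- (c)
        intro j hjC hvar
        replace hvar : (θ j).subst σ = Lvl.var j := hvar
        rcases hθj : θ j with m | _ | l | ⟨a, b⟩
        · rw [hθj] at hvar
          simp only [Lvl.subst] at hvar
          by_cases hme : m ∈ e.1.fv ∪ e.2.fv
          · have hjσ : j ∈ (σ m).fv := by rw [hvar]; simp [Lvl.fv]
            obtain ⟨hav, hθjv, -⟩ := hfresh m hme j hjσ
            rw [hθj] at hθjv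
            injection hθjv with hmj
            subst hmj
            exact absurd hme (hav e (Finset.mem_insert_self _ _))
          · rw [hdom m hme] at hvar
            have hmj : m = j := by injection hvar
            rw [hmj] at hθj hme
            obtain ⟨e', he', hje'⟩ := hc j hjC hθj
            rcases Finset.mem_insert.mp he' with rfl | he'
            · exact absurd hje' hme
            · refine ⟨substEqn σ e', Finset.mem_image_of_mem _ he', ?_⟩
              have hjσ : j ∈ (σ j).fv := by rw [hdom j hme]; simp [Lvl.fv]
              rcases Finset.mem_union.mp hje' with h' | h'
              · exact Finset.mem_union_left _ (Lvl.fv_subst_mem h' hjσ)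
              · exact Finset.mem_union_right _ (Lvl.fv_subst_mem h' hjσ)
        · rw [hθj] at hvar; simp [Lvl.subst] at hvar
        · rw [hθj] at hvar; simp [Lvl.subst] at hvar
        · rw [hθj] at hvar; simp [Lvl.subst] at hvar
/-- Correctness of the constraint-postponement unification algorithm: starting
from `(C; ∅)`, if the algorithm reaches `(∅; θ)` then `θ` is a most general
unifier of `C`, and if it reaches `⊥` then `C` has no unifier. -/
theorem unification_correct (C : Finset Eqn) :
    (∀ θ : ℕ → Lvl,
      Relation.ReflTransGen Step (.ok C (fun i => Lvl.var i)) (.ok ∅ θ) →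
      IsMGUP θ C) ∧
    (Relation.ReflTransGen Step (.ok C (fun i => Lvl.var i)) .bot →
      ¬ ∃ τ, SolvesP τ C) := by
  have hinit : AlgInv C (.ok C (fun i => Lvl.var i)) := by
    refine ⟨?_, ?_, ?_⟩
    · intro τ' hτ'
      have heq : (fun i => (Lvl.var i).subst τ') = τ' := funext fun i => rfl
      rw [heq]; exact hτ'
    · intro τ hτ
      exact ⟨τ, hτ, fun j _ φ => rfl⟩
    · intro j hj _; exact hj
  have hreach : ∀ c, Relation.ReflTransGen Step (.ok C (fun i => Lvl.var i)) c →
      AlgInv C c := by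
    intro c h
    induction h with
    | refl => exact hinit
    | tail _ hs ih => exact alginv_step hs ih
  constructor
  · intro θ hθ
    obtain ⟨ha, hb, -⟩ := hreach _ hθ
    constructor
    · have hsol := ha Lvl.var (by intro e' he'; simp at he')
      have heq : (fun i => (θ i).subst Lvl.var) = θ := funext fun i => Lvl.subst_var _
      rwa [heq] at hsol
    · intro τ hτ
      obtain ⟨τ', -, hfac⟩ := hb τ hτ
      exact ⟨τ', fun j hj => hfac j hj⟩
  · intro hbot
    exact hreach _ hbot
end
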